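/- arXiv:2002.11706 — 3 statements merged into one kernel-verified Lean document; each statement's English description precedes it below -/
import Mathlib

section
/- Let n ≥ 1 and let A(t) = (a_{ij}(t)) be an n×n real matrix whose entries a_{ij} : [0,∞) → ℝ are continuous and satisfy a_{ij}(t) ≥ 0 for all t ∈ (0,∞) whenever i ≠ j. Let u₀ ∈ ℝⁿ satisfy u₀ⁱ ≥ 0 for all i, and let u solve u'(t) = A(t)u(t), u(0) = u₀. Then for every i = 1,…,n and every t ∈ (0,∞), uⁱ(t) ≥ u₀ⁱ · exp(∫₀ᵗ a_{ii}(s) ds). -/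
open Set Matrix

/-- Lower bound for components of solutions of a linear ODE `u' = A t * u` on `[0,∞)`
with continuous coefficients and nonnegative off-diagonal entries:
`uⁱ(t) ≥ u₀ⁱ · exp(∫₀ᵗ a_{ii}(s) ds)`. -/
theorem wazewski_lower_bound {n : ℕ} (hn : 1 ≤ n) (A : ℝ → Matrix (Fin n) (Fin n) ℝ)
    (hA : ∀ i j, ContinuousOn (fun t => A t i j) (Ici (0 : ℝ)))
    (hpos : ∀ i j, i ≠ j → ∀ t ∈ Ioi (0 : ℝ), 0 ≤ A t i j)
    (u₀ : Fin n → ℝ) (hu₀ : ∀ i, 0 ≤ u₀ i)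
    (u : ℝ → Fin n → ℝ) (hu0 : u 0 = u₀)
    (hu : ∀ t ∈ Ici (0 : ℝ), HasDerivWithinAt u (A t *ᵥ u t) (Ici (0 : ℝ)) t) :
    ∀ t ∈ Ioi (0 : ℝ), ∀ i, u₀ i * Real.exp (∫ s in (0 : ℝ)..t, A s i i) ≤ u t i := by
  -- extension of `A` to all of `ℝ` by continuity
  set B : ℝ → Matrix (Fin n) (Fin n) ℝ := fun t => A (max t 0) with hBdef
  have hBA : ∀ t, 0 ≤ t → B t = A t := by
    intro t ht; simp only [hBdef, max_eq_left ht]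
  have hBc : ∀ i j, Continuous fun t => B t i j := by
    intro i j
    exact (hA i j).comp_continuous (continuous_id.max continuous_const)
      (fun x => mem_Ici.2 (le_max_right _ _))
  -- componentwise derivative
  have hui : ∀ i, ∀ t ∈ Ici (0 : ℝ), HasDerivWithinAt (fun s => u s i)
      ((A t *ᵥ u t) i) (Ici (0 : ℝ)) t := by
    intro i t ht
    exact (ContinuousLinearMap.proj (R := ℝ) (φ := fun _ : Fin n => ℝ)
      i).hasFDerivAt.comp_hasDerivWithinAt t (hu t ht)
  have hucont : ∀ i, ContinuousOn (fun s => u s i) (Ici (0 : ℝ)) :=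
    fun i t ht => (hui i t ht).continuousWithinAt
  -- Step 1: nonnegativity of all components on `[0, ∞)`
  have nonneg : ∀ s ∈ Ici (0 : ℝ), ∀ j, 0 ≤ u s j := by
    intro T hT
    rw [mem_Ici] at hT
    -- a bound for row sums on `[0, T]`
    obtain ⟨C, hC⟩ := (isCompact_Icc (a := (0 : ℝ)) (b := T)).exists_bound_of_continuousOn
      (f := fun t => ∑ i, ∑ j, |B t i j|)
      ((continuous_finset_sum _ fun i _ => continuous_finset_sum _ fun j _ =>
        (hBc i j).abs).continuousOn)
    have hrow : ∀ s ∈ Icc (0 : ℝ) T, ∀ i, ∑ j, |A s i j| ≤ C := by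
      intro s hs i
      have h1 : ∑ j, |A s i j| ≤ ∑ i', ∑ j, |B s i' j| := by
        rw [hBA s hs.1]
        exact Finset.single_le_sum (f := fun i' => ∑ j, |A s i' j|)
          (fun i' _ => Finset.sum_nonneg fun j _ => abs_nonneg _) (Finset.mem_univ i)
      calc ∑ j, |A s i j| ≤ ∑ i', ∑ j, |B s i' j| := h1
        _ ≤ ‖∑ i', ∑ j, |B s i' j|‖ := le_abs_self _
        _ ≤ C := hC s hs
    set L : ℝ := C + 1 with hLdef
    -- perturbed positivity
    have main : ∀ ε > (0 : ℝ), ∀ s ∈ Icc (0 : ℝ) T, ∀ i, 0 < u s i + ε * Real.exp (L * s) := by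
      intro ε hε
      by_contra hcon
      push_neg at hcon
      set g : Fin n → ℝ → ℝ := fun i s => u s i + ε * Real.exp (L * s) with hgdef
      have hgc : ∀ i, ContinuousOn (g i) (Icc (0 : ℝ) T) :=
        fun i => ((hucont i).mono Icc_subset_Ici_self).add
          (Continuous.continuousOn (by continuity))
      set E : Set ℝ := ⋃ i, (Icc (0 : ℝ) T ∩ (g i) ⁻¹' (Iic 0)) with hEdef
      have hEc : IsClosed E := isClosed_iUnion_of_finite fun i =>
        (hgc i).preimage_isClosed_of_isClosed isClosed_Icc isClosed_Iic
      have hEne : E.Nonempty := by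
        obtain ⟨s, hs, i, hi⟩ := hcon
        exact ⟨s, mem_iUnion.2 ⟨i, hs, by simpa [hgdef] using hi⟩⟩
      have hEbdd : BddBelow E := ⟨0, fun x hx => by
        obtain ⟨i, hx1, -⟩ := mem_iUnion.1 hx; exact hx1.1⟩
      set t₀ : ℝ := sInf E with ht₀def
      have ht₀E : t₀ ∈ E := hEc.csInf_mem hEne hEbdd
      obtain ⟨i, ⟨ht₀0, ht₀T⟩, hgi⟩ := mem_iUnion.1 ht₀E
      rw [mem_preimage, mem_Iic] at hgi
      have hlt : ∀ s, 0 ≤ s → s < t₀ → ∀ j, 0 < g j s := by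
        intro s hs0 hst j
        by_contra hle
        push_neg at hle
        exact absurd (csInf_le hEbdd (mem_iUnion.2 ⟨j, ⟨hs0, hst.le.trans ht₀T⟩, hle⟩))
          (not_le.2 hst)
      have ht₀pos : 0 < t₀ := by
        rcases ht₀0.lt_or_eq with h | h
        · exact h
        · exfalso
          have : g i 0 = u₀ i + ε := by simp [hgdef, hu0]
          have h0 : 0 < g i 0 := by rw [this]; have := hu₀ i; linarith
          have h0' : 0 < g i t₀ := by rw [← h]; exact h0
          exact absurd hgi (not_le.2 h0')
      have hclos : t₀ ∈ closure (Ico (0 : ℝ) t₀) := by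
        rw [closure_Ico ht₀pos.ne]
        exact ⟨ht₀pos.le, le_rfl⟩
      have hne : (nhdsWithin t₀ (Ico (0 : ℝ) t₀)).NeBot :=
        mem_closure_iff_nhdsWithin_neBot.1 hclos
      have hge : ∀ j, 0 ≤ g j t₀ := by
        intro j
        have hcw : ContinuousWithinAt (g j) (Ico (0 : ℝ) t₀) t₀ :=
          ((hgc j) t₀ ⟨ht₀0, ht₀T⟩).mono (fun x hx => ⟨hx.1, hx.2.le.trans ht₀T⟩)
        exact ge_of_tendsto hcw (Filter.eventually_of_mem self_mem_nhdsWithin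
          fun s hs => (hlt s hs.1 hs.2 j).le)
      have hgi0 : g i t₀ = 0 := le_antisymm hgi (hge i)
      -- derivative of `g i` at `t₀` within `Icc 0 t₀`
      have hexp : HasDerivAt (fun s => ε * Real.exp (L * s)) (ε * (Real.exp (L * t₀) * L)) t₀ := by
        have h1 : HasDerivAt (fun s : ℝ => L * s) L t₀ := by
          simpa using (hasDerivAt_id t₀).const_mul L
        exact (h1.exp).const_mul ε
      have hd : HasDerivWithinAt (g i)
          ((A t₀ *ᵥ u t₀) i + ε * (Real.exp (L * t₀) * L)) (Icc (0 : ℝ) t₀) t₀ :=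
        (((hui i t₀ (mem_Ici.2 ht₀0)).mono Icc_subset_Ici_self).add
          (hexp.hasDerivWithinAt))
      -- derivative is nonpositive since `t₀` is a right-endpoint minimum
      have hd0 : (A t₀ *ᵥ u t₀) i + ε * (Real.exp (L * t₀) * L) ≤ 0 := by
        rw [hasDerivWithinAt_iff_tendsto_slope] at hd
        have hsub : Ico (0 : ℝ) t₀ ⊆ Icc (0 : ℝ) t₀ \ {t₀} :=
          fun x hx => ⟨⟨hx.1, hx.2.le⟩, fun hh => absurd (hh ▸ hx.2) (lt_irrefl _)⟩
        have hne2 : (nhdsWithin t₀ (Icc (0 : ℝ) t₀ \ {t₀})).NeBot :=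
          hne.mono (nhdsWithin_mono _ hsub)
        refine le_of_tendsto hd (Filter.eventually_of_mem self_mem_nhdsWithin ?_)
        intro s hs
        have hst : s < t₀ := lt_of_le_of_ne hs.1.2 (fun h => hs.2 (by simp [h]))
        have hgs : 0 ≤ g i s := (hlt s hs.1.1 hst i).le
        rw [slope_def_field]
        rw [hgi0]
        have : g i s - 0 = g i s := by ring
        rw [this]
        exact div_nonpos_of_nonneg_of_nonpos hgs (by linarith)
      -- but the derivative is strictly positive: contradiction
      have hE0 : (0 : ℝ) < Real.exp (L * t₀) := Real.exp_pos _
      have hU : u t₀ i = -(ε * Real.exp (L * t₀)) := by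
        have := hgi0
        simp only [hgdef] at this
        linarith
      have hUj : ∀ j, -(ε * Real.exp (L * t₀)) ≤ u t₀ j := by
        intro j
        have := hge j
        simp only [hgdef] at this
        linarith
      have hterm : ∀ j, -(|A t₀ i j| * (ε * Real.exp (L * t₀))) ≤ A t₀ i j * u t₀ j := by
        intro j
        rcases eq_or_ne j i with h | h
        · subst h
          rw [hU]
          have : A t₀ j j * -(ε * Real.exp (L * t₀)) = -(A t₀ j j * (ε * Real.exp (L * t₀))) := by
            ring
          rw [this]
          have h1 : A t₀ j j * (ε * Real.exp (L * t₀)) ≤ |A t₀ j j| * (ε * Real.exp (L * t₀)) :=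
            mul_le_mul_of_nonneg_right (le_abs_self _) (by positivity)
          linarith
        · have hAij : 0 ≤ A t₀ i j := hpos i j (Ne.symm h) t₀ ht₀pos
          have h1 : A t₀ i j * -(ε * Real.exp (L * t₀)) ≤ A t₀ i j * u t₀ j :=
            mul_le_mul_of_nonneg_left (hUj j) hAij
          have h2 : -(|A t₀ i j| * (ε * Real.exp (L * t₀))) ≤
              A t₀ i j * -(ε * Real.exp (L * t₀)) := by
            rw [abs_of_nonneg hAij]; ring_nf; exact le_rfl
          linarith
      have hsum : -(C * (ε * Real.exp (L * t₀))) ≤ (A t₀ *ᵥ u t₀) i := by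
        have h1 : ∑ j, -(|A t₀ i j| * (ε * Real.exp (L * t₀))) ≤ ∑ j, A t₀ i j * u t₀ j :=
          Finset.sum_le_sum fun j _ => hterm j
        have h2 : ∑ j, -(|A t₀ i j| * (ε * Real.exp (L * t₀)))
            = -((∑ j, |A t₀ i j|) * (ε * Real.exp (L * t₀))) := by
          rw [Finset.sum_neg_distrib, ← Finset.sum_mul]
        have h3 : ∑ j, |A t₀ i j| ≤ C := hrow t₀ ⟨ht₀0, ht₀T⟩ i
        have h4 : -(C * (ε * Real.exp (L * t₀))) ≤ -((∑ j, |A t₀ i j|) * (ε * Real.exp (L * t₀))) := by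
          have := mul_le_mul_of_nonneg_right h3 (show (0:ℝ) ≤ ε * Real.exp (L * t₀) by positivity)
          linarith
        calc -(C * (ε * Real.exp (L * t₀))) ≤ -((∑ j, |A t₀ i j|) * (ε * Real.exp (L * t₀))) := h4
          _ = ∑ j, -(|A t₀ i j| * (ε * Real.exp (L * t₀))) := h2.symm
          _ ≤ ∑ j, A t₀ i j * u t₀ j := h1
          _ = (A t₀ *ᵥ u t₀) i := by rw [Matrix.mulVec, dotProduct]
      have hX : 0 < ε * Real.exp (L * t₀) := mul_pos hε hE0
      have hfin : ε * (Real.exp (L * t₀) * L)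
          = C * (ε * Real.exp (L * t₀)) + ε * Real.exp (L * t₀) := by
        rw [hLdef]; ring
      linarith [hd0, hsum, hX, hfin]
    -- let ε → 0
    intro j
    by_contra hneg
    push_neg at hneg
    have hε : (0 : ℝ) < -u T j / (2 * Real.exp (L * T)) := by
      have := Real.exp_pos (L * T)
      exact div_pos (by linarith) (by positivity)
    have := main _ hε T ⟨hT, le_rfl⟩ j
    have hE : (0 : ℝ) < Real.exp (L * T) := Real.exp_pos _
    have hc : -u T j / (2 * Real.exp (L * T)) * Real.exp (L * T) = -u T j / 2 := by
      field_simp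
    rw [hc] at this
    linarith
  -- Step 2: monotonicity of `u · i * exp (-∫ a_ii)`
  intro t ht i
  rw [mem_Ioi] at ht
  set a : ℝ → ℝ := fun s => B s i i with hadef
  have hac : Continuous a := hBc i i
  set φ : ℝ → ℝ := fun s => ∫ r in (0 : ℝ)..s, a r with hφdef
  have hφ : ∀ s : ℝ, HasDerivAt φ (a s) s := fun s =>
    intervalIntegral.integral_hasDerivAt_right (hac.intervalIntegrable _ _)
      (hac.stronglyMeasurableAtFilter _ _) hac.continuousAt
  set F : ℝ → ℝ := fun s => u s i * Real.exp (-φ s) with hFdef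
  have hF : ∀ s ∈ Ici (0 : ℝ), HasDerivWithinAt F
      ((A s *ᵥ u s) i * Real.exp (-φ s) + u s i * (Real.exp (-φ s) * -(a s)))
      (Ici (0 : ℝ)) s := by
    intro s hs
    exact (hui i s hs).mul (((hφ s).neg.exp).hasDerivWithinAt)
  have hFc : ContinuousOn F (Icc (0 : ℝ) t) := fun s hs =>
    ((hF s hs.1).continuousWithinAt).mono Icc_subset_Ici_self
  have hFd : ∀ x ∈ Ioo (0 : ℝ) t, HasDerivAt F
      ((A x *ᵥ u x) i * Real.exp (-φ x) + u x i * (Real.exp (-φ x) * -(a x))) x := by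
    intro x hx
    exact (hF x hx.1.le).hasDerivAt (Ici_mem_nhds hx.1)
  have hderiv_nonneg : ∀ x ∈ Ioo (0 : ℝ) t,
      0 ≤ (A x *ᵥ u x) i * Real.exp (-φ x) + u x i * (Real.exp (-φ x) * -(a x)) := by
    intro x hx
    have hax : a x = A x i i := by show B x i i = A x i i; rw [hBA x hx.1.le]
    have hsplit : (A x *ᵥ u x) i = ∑ j ∈ Finset.univ \ {i}, A x i j * u x j + A x i i * u x i := by
      rw [Matrix.mulVec, dotProduct]
      exact Finset.sum_eq_sum_sdiff_singleton_add (Finset.mem_univ i) _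
    have hS : 0 ≤ ∑ j ∈ Finset.univ \ {i}, A x i j * u x j := by
      refine Finset.sum_nonneg fun j hj => ?_
      rw [Finset.mem_sdiff, Finset.mem_singleton] at hj
      exact mul_nonneg (hpos i j (Ne.symm hj.2) x hx.1) (nonneg x hx.1.le j)
    have hEx : (0 : ℝ) < Real.exp (-φ x) := Real.exp_pos _
    rw [hsplit, hax]
    have : (∑ j ∈ Finset.univ \ {i}, A x i j * u x j + A x i i * u x i) * Real.exp (-φ x)
        + u x i * (Real.exp (-φ x) * -(A x i i))
        = (∑ j ∈ Finset.univ \ {i}, A x i j * u x j) * Real.exp (-φ x) := by ring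
    rw [this]
    positivity
  have hmono : MonotoneOn F (Icc (0 : ℝ) t) := by
    apply monotoneOn_of_deriv_nonneg (convex_Icc _ _) hFc
    · intro x hx
      rw [interior_Icc] at hx
      exact ((hFd x hx).differentiableAt).differentiableWithinAt
    · intro x hx
      rw [interior_Icc] at hx
      rw [(hFd x hx).deriv]
      exact hderiv_nonneg x hx
  have hle : F 0 ≤ F t := hmono ⟨le_rfl, ht.le⟩ ⟨ht.le, le_rfl⟩ ht.le
  have hφ0 : φ 0 = 0 := intervalIntegral.integral_same
  have hF0 : F 0 = u₀ i := by
    simp [hFdef, hφ0, hu0]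
  have hint : (∫ s in (0 : ℝ)..t, A s i i) = φ t := by
    rw [hφdef]
    refine (intervalIntegral.integral_congr ?_).symm
    intro s hs
    rw [uIcc_of_le ht.le] at hs
    show B s i i = A s i i
    rw [hBA s hs.1]
  rw [hint]
  have hEφ : (0 : ℝ) < Real.exp (φ t) := Real.exp_pos _
  rw [hF0, hFdef] at hle
  simp only at hle
  rw [Real.exp_neg] at hle
  calc u₀ i * Real.exp (φ t) ≤ u t i * (Real.exp (φ t))⁻¹ * Real.exp (φ t) :=
        mul_le_mul_of_nonneg_right hle hEφ.le
    _ = u t i := by field_simp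
end

section
/- Let T ≥ 1 and let t satisfy 0 < t < T − e^{−T/2}. Let Z be a real random variable whose law is the Gaussian measure on ℝ with mean 0 and variance t, and set W = e^{−T/2}(e^{−T/2} − (T − t) e^{t/2} cos Z). Then ℙ(W > 0) > 0 and ℙ(W < 0) > 0, and the expectation satisfies 𝔼[W] = e^{−T/2}(e^{−T/2} − (T − t)) < 0. -/
open MeasureTheory ProbabilityTheory Real NNReal

lemma key_integral {v : ℝ} (hv : 0 < v) :
    ∫ x : ℝ, Real.exp (-x ^ 2 / (2 * v)) * Real.cos x
      = Real.sqrt (2 * π * v) * Real.exp (-v / 2) := by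
  set b : ℂ := ((1 / (2 * v) : ℝ) : ℂ) with hb_def
  have hb : 0 < b.re := by simp [hb_def]; positivity
  have H := fourierIntegral_gaussian hb 1
  have heq : ∀ x : ℝ, Complex.exp (Complex.I * 1 * x) * Complex.exp (-b * x ^ 2)
      = Complex.exp (-b * x ^ 2 + Complex.I * x + 0) := by
    intro x; rw [← Complex.exp_add]; ring_nf
  have hi : Integrable (fun x : ℝ => Complex.exp (Complex.I * 1 * x) * Complex.exp (-b * x ^ 2)) := by
    refine (integrable_cexp_quadratic hb Complex.I 0).congr ?_
    exact ae_of_all _ fun x => (heq x).symm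
  have hre := congrArg Complex.re H
  have hswap : ∫ x : ℝ, (Complex.exp (Complex.I * 1 * x) * Complex.exp (-b * x ^ 2)).re
      = (∫ x : ℝ, Complex.exp (Complex.I * 1 * x) * Complex.exp (-b * x ^ 2)).re := by
    simpa using integral_re hi
  rw [← hswap] at hre
  have hlhs : ∀ x : ℝ, (Complex.exp (Complex.I * 1 * x) * Complex.exp (-b * x ^ 2)).re
      = Real.exp (-x ^ 2 / (2 * v)) * Real.cos x := by
    intro x
    rw [heq x, Complex.exp_re]
    have h1 : (-b * (x:ℂ) ^ 2 + Complex.I * x + 0).re = -x ^ 2 / (2 * v) := by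
      simp [hb_def, ← Complex.ofReal_pow]; ring
    have h2 : (-b * (x:ℂ) ^ 2 + Complex.I * x + 0).im = x := by
      simp [hb_def, ← Complex.ofReal_pow]
    rw [h1, h2]
  rw [integral_congr_ae (ae_of_all _ hlhs)] at hre
  rw [hre]
  have hπb : (↑π / b) = ((2 * π * v : ℝ) : ℂ) := by
    rw [hb_def]
    push_cast
    field_simp
  rw [hπb]
  have h12 : (1 / 2 : ℂ) = ((1 / 2 : ℝ) : ℂ) := by norm_num
  rw [h12, ← Complex.ofReal_cpow (by positivity)]
  have hexp : (-(1:ℂ) ^ 2 / (4 * b)) = ((-v / 2 : ℝ) : ℂ) := by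
    rw [hb_def]; push_cast; field_simp; ring
  rw [hexp, ← Complex.ofReal_exp, ← Complex.ofReal_mul, Complex.ofReal_re,
    ← Real.sqrt_eq_rpow]


lemma integral_cos_gaussianReal {v : ℝ≥0} (hv : v ≠ 0) :
    ∫ x, Real.cos x ∂(gaussianReal 0 v) = Real.exp (-(v : ℝ) / 2) := by
  have hv' : (0:ℝ) < v := lt_of_le_of_ne (v.coe_nonneg) (by exact_mod_cast (Ne.symm hv))
  rw [gaussianReal_of_var_ne_zero _ hv]
  have hpdf : gaussianPDF 0 v = fun x => ((Real.toNNReal (gaussianPDFReal 0 v x) : ℝ≥0) : ENNReal) := by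
    ext x; rw [gaussianPDF]; rfl
  rw [hpdf, integral_withDensity_eq_integral_smul
    ((measurable_gaussianPDFReal 0 v).real_toNNReal) _]
  have : ∀ x : ℝ, (Real.toNNReal (gaussianPDFReal 0 v x)) • Real.cos x
      = (Real.sqrt (2 * π * v))⁻¹ * (Real.exp (-x ^ 2 / (2 * v)) * Real.cos x) := by
    intro x
    rw [NNReal.smul_def, smul_eq_mul, Real.coe_toNNReal _ (gaussianPDFReal_nonneg 0 v x),
      gaussianPDFReal]
    ring_nf
  rw [integral_congr_ae (ae_of_all _ this), integral_const_mul, key_integral hv']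
  rw [← mul_assoc, inv_mul_cancel₀ (by positivity), one_mul]

/-- For `T ≥ 1` and `0 < t < T − e^{−T/2}`, the random variable
`W = e^{−T/2}(e^{−T/2} − (T−t)e^{t/2} cos Z)`, with `Z` centered Gaussian of variance `t`,
takes both positive and negative values with positive probability, and has negative mean
`e^{−T/2}(e^{−T/2} − (T−t))`. -/
theorem malliavin_derivative_sign_change {Ω : Type*} {mΩ : MeasurableSpace Ω}
    {P : Measure Ω} [IsProbabilityMeasure P]
    (T t : ℝ) (hT : 1 ≤ T) (ht : 0 < t) (htT : t < T - Real.exp (-T / 2))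
    (Z : Ω → ℝ) (hZ : Measurable Z)
    (hlaw : Measure.map Z P = gaussianReal 0 t.toNNReal)
    (W : Ω → ℝ)
    (hW : ∀ ω, W ω = Real.exp (-T / 2) *
      (Real.exp (-T / 2) - (T - t) * Real.exp (t / 2) * Real.cos (Z ω))) :
    0 < P {ω | 0 < W ω} ∧ 0 < P {ω | W ω < 0} ∧
      ∫ ω, W ω ∂P = Real.exp (-T / 2) * (Real.exp (-T / 2) - (T - t)) ∧
      Real.exp (-T / 2) * (Real.exp (-T / 2) - (T - t)) < 0 := by
  have he : 0 < Real.exp (-T / 2) := Real.exp_pos _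
  have hTt : Real.exp (-T / 2) < T - t := by linarith
  have hK : 0 < (T - t) * Real.exp (t / 2) := by
    have : 0 < T - t := lt_trans he hTt
    positivity
  have hvne : t.toNNReal ≠ 0 := ne_of_gt (Real.toNNReal_pos.mpr ht)
  have hvcoe : ((t.toNNReal : ℝ≥0) : ℝ) = t := Real.coe_toNNReal _ ht.le
  have habs := gaussianReal_absolutelyContinuous' 0 hvne
  -- the two events
  have hpos : ∀ (S : Set ℝ), IsOpen S → S.Nonempty → 0 < gaussianReal 0 t.toNNReal S := by
    intro S hS hne
    refine pos_iff_ne_zero.mpr fun h0 => ?_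
    exact (hS.measure_pos volume hne).ne' (habs h0)
  constructor
  · have hset : {ω | 0 < W ω}
        = Z ⁻¹' {x | (T - t) * Real.exp (t / 2) * Real.cos x < Real.exp (-T / 2)} := by
      ext ω
      simp only [Set.mem_setOf_eq, Set.mem_preimage, hW ω]
      constructor
      · intro h; nlinarith
      · intro h; nlinarith
    rw [hset, ← Measure.map_apply hZ
      (measurableSet_lt (by fun_prop) measurable_const), hlaw]
    refine hpos _ (isOpen_lt (by fun_prop) continuous_const) ⟨π, ?_⟩
    simp only [Set.mem_setOf_eq, Real.cos_pi]
    nlinarith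
  constructor
  · have hset : {ω | W ω < 0}
        = Z ⁻¹' {x | Real.exp (-T / 2) < (T - t) * Real.exp (t / 2) * Real.cos x} := by
      ext ω
      simp only [Set.mem_setOf_eq, Set.mem_preimage, hW ω]
      constructor
      · intro h; nlinarith
      · intro h; nlinarith
    rw [hset, ← Measure.map_apply hZ
      (measurableSet_lt measurable_const (by fun_prop)), hlaw]
    refine hpos _ (isOpen_lt continuous_const (by fun_prop)) ⟨0, ?_⟩
    simp only [Set.mem_setOf_eq, Real.cos_zero, mul_one]
    have h1 : (1:ℝ) ≤ Real.exp (t / 2) := Real.one_le_exp (by linarith)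
    nlinarith
  -- mean
  have hcos : Integrable (fun ω => Real.cos (Z ω)) P := by
    refine (integrable_const (1:ℝ)).mono' ((Real.continuous_cos.measurable.comp hZ).aestronglyMeasurable) ?_
    exact ae_of_all _ fun ω => by simp [Real.abs_cos_le_one]
  have hmap : ∫ ω, Real.cos (Z ω) ∂P = Real.exp (-t / 2) := by
    rw [← integral_map hZ.aemeasurable Real.continuous_cos.aestronglyMeasurable, hlaw,
      integral_cos_gaussianReal hvne, hvcoe]
  constructor
  · have : ∫ ω, W ω ∂P = ∫ ω, (Real.exp (-T / 2) * Real.exp (-T / 2)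
        - (Real.exp (-T / 2) * ((T - t) * Real.exp (t / 2))) * Real.cos (Z ω)) ∂P := by
      refine integral_congr_ae (ae_of_all _ fun ω => ?_)
      rw [hW ω]; ring
    rw [this, integral_sub (integrable_const _) (hcos.const_mul _), integral_const,
      integral_const_mul, hmap]
    simp only [measure_univ, probReal_univ, ENNReal.toReal_one, smul_eq_mul, one_mul]
    have h1 : Real.exp (t / 2) * Real.exp (-t / 2) = 1 := by
      have h0 : t / 2 + -t / 2 = 0 := by ring
      rw [← Real.exp_add, h0, Real.exp_zero]
    linear_combination (-(Real.exp (-T / 2) * (T - t))) * h1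
  · exact mul_neg_of_pos_of_neg he (by linarith)
end

section
/- Let α ∈ ℝ, β > 0, τ > 0. Define g : ℝ → ℝ by g(x) = α + β(x − sin x), let ψ be its inverse function, let p_τ(x) = (2πτ)^{−1/2} e^{−x²/(2τ)}, and let ρ(y) = p_τ(ψ(y)) / (β(1 − cos ψ(y))) be the density of the law of g(Z) for Z Gaussian with mean 0 and variance τ. Then there do not exist constants C > 0 and Λ > 0 such that ρ(y) ≤ C e^{−y²/(2Λ)} for Lebesgue-almost every y ∈ ℝ; that is, for every C > 0 and Λ > 0, the set {y ∈ ℝ : ρ(y) > C e^{−y²/(2Λ)}} has positive Lebesgue measure. -/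
open MeasureTheory Real Filter Set Topology

/-- The density `ρ(y) = p_τ(ψ(y)) / (β(1 − cos ψ(y)))` of the law of `g(Z)`,
where `g(x) = α + β(x − sin x)`, `ψ = g⁻¹` and `Z` is centered Gaussian of variance `τ`,
admits no Gaussian-type upper bound: for all `C > 0` and `Λ > 0`, the set where
`ρ(y) > C e^{−y²/(2Λ)}` has positive Lebesgue measure. -/
theorem no_gaussian_upper_bound (α β τ : ℝ) (hβ : 0 < β) (hτ : 0 < τ)
    (g : ℝ → ℝ) (hg : ∀ x, g x = α + β * (x - Real.sin x))
    (ψ : ℝ → ℝ) (hψ₁ : Function.LeftInverse ψ g) (hψ₂ : Function.RightInverse ψ g)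
    (p : ℝ → ℝ) (hp : ∀ x, p x = (2 * Real.pi * τ) ^ (-(1:ℝ)/2) * Real.exp (-x ^ 2 / (2 * τ)))
    (ρ : ℝ → ℝ) (hρ : ∀ y, ρ y = p (ψ y) / (β * (1 - Real.cos (ψ y)))) :
    ∀ C > (0 : ℝ), ∀ Λ > (0 : ℝ),
      0 < volume {y : ℝ | C * Real.exp (-y ^ 2 / (2 * Λ)) < ρ y} := by
  intro C hC Λ hΛ
  have hinj : Function.Injective g := hψ₁.injective
  have hgc : Continuous g := by
    have : Continuous fun x : ℝ => α + β * (x - Real.sin x) := by continuity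
    exact this.congr fun x => (hg x).symm
  -- continuity of p
  have hpc : Continuous p := by
    have : Continuous fun x : ℝ => (2 * Real.pi * τ) ^ (-(1:ℝ)/2) * Real.exp (-x ^ 2 / (2 * τ)) := by
      continuity
    exact this.congr fun x => (hp x).symm
  have hp0 : 0 < p 0 := by
    rw [hp]
    positivity
  -- the denominator tends to 0 within positives
  have hden : Tendsto (fun x : ℝ => β * (1 - Real.cos x)) (𝓝[>] (0:ℝ)) (𝓝[>] (0:ℝ)) := by
    rw [tendsto_nhdsWithin_iff]
    constructor
    · have : Tendsto (fun x : ℝ => β * (1 - Real.cos x)) (𝓝 0) (𝓝 (β * (1 - Real.cos 0))) := by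
        exact (Continuous.mul continuous_const (continuous_const.sub Real.continuous_cos)).tendsto 0
      simpa using this.mono_left nhdsWithin_le_nhds
    · filter_upwards [Ioo_mem_nhdsGT Real.pi_pos] with x hx
      have : Real.cos x < Real.cos 0 :=
        Real.cos_lt_cos_of_nonneg_of_le_pi le_rfl hx.2.le hx.1
      rw [Real.cos_zero] at this
      have : 0 < 1 - Real.cos x := by linarith
      exact mul_pos hβ this
  -- ρ ∘ g blows up
  have hblow : Tendsto (fun x : ℝ => p x / (β * (1 - Real.cos x))) (𝓝[>] (0:ℝ)) atTop := by
    have hnum : Tendsto p (𝓝[>] (0:ℝ)) (𝓝 (p 0)) :=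
      (hpc.tendsto 0).mono_left nhdsWithin_le_nhds
    have hinv : Tendsto (fun x : ℝ => (β * (1 - Real.cos x))⁻¹) (𝓝[>] (0:ℝ)) atTop :=
      hden.inv_tendsto_nhdsGT_zero
    simpa [div_eq_mul_inv] using hnum.pos_mul_atTop hp0 hinv
  have hev : ∀ᶠ x in 𝓝[>] (0:ℝ), C < p x / (β * (1 - Real.cos x)) :=
    hblow.eventually_gt_atTop C
  obtain ⟨u, hu0, hu⟩ := (mem_nhdsGT_iff_exists_Ioc_subset).1 hev
  have hu0' : (0:ℝ) < u := hu0
  -- the interval [u/2, u] maps into the bad set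
  have hsub : uIcc (g (u/2)) (g u) ⊆ {y : ℝ | C * Real.exp (-y ^ 2 / (2 * Λ)) < ρ y} := by
    have h1 : uIcc (g (u/2)) (g u) ⊆ g '' (uIcc (u/2) u) :=
      intermediate_value_uIcc hgc.continuousOn
    intro y hy
    obtain ⟨x, hx, rfl⟩ := h1 hy
    have hxIoc : x ∈ Ioc (0:ℝ) u := by
      rw [uIcc_of_le (by linarith)] at hx
      exact ⟨by linarith [hx.1], hx.2⟩
    have hbig : C < p x / (β * (1 - Real.cos x)) := hu hxIoc
    have hexp : Real.exp (-(g x) ^ 2 / (2 * Λ)) ≤ 1 := by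
      apply Real.exp_le_one_iff.2
      have : 0 ≤ (g x) ^ 2 := sq_nonneg _
      have h2Λ : 0 < 2 * Λ := by linarith
      apply div_nonpos_of_nonpos_of_nonneg (by linarith) h2Λ.le
    have hCle : C * Real.exp (-(g x) ^ 2 / (2 * Λ)) ≤ C := by
      calc C * Real.exp (-(g x) ^ 2 / (2 * Λ)) ≤ C * 1 := by
            exact mul_le_mul_of_nonneg_left hexp hC.le
        _ = C := mul_one C
    have hρgx : ρ (g x) = p x / (β * (1 - Real.cos x)) := by
      rw [hρ, hψ₁ x]
    exact Set.mem_setOf.2 (by rw [hρgx]; linarith)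
  have hne : g (u/2) ≠ g u := fun h => by
    have := hinj h; linarith
  calc (0 : ENNReal) < volume (uIcc (g (u/2)) (g u)) := by
        rw [uIcc, Real.volume_Icc]
        have : min (g (u/2)) (g u) < max (g (u/2)) (g u) := min_lt_max.2 hne
        simp only [ENNReal.ofReal_pos]
        linarith
    _ ≤ volume {y : ℝ | C * Real.exp (-y ^ 2 / (2 * Λ)) < ρ y} := measure_mono hsub
end
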